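/- Let 0 < α < 1, r ≥ 1, T > 0, N ≥ 1, and let t_k = T(k/N)^r be the graded mesh with fitted interpolant v̄ of a function v : [0,t_N] → ℝ on [0,t_n]. Suppose v(0) = 0, v is twice continuously differentiable on (0,t_N], and for some constant C₀: |v′(t)| ≤ C₀ t^{2α−1} and |v″(t)| ≤ C₀ t^{2α−2} for 0 < t ≤ min{1,t_N}, and |v′(t)| ≤ C₀ and |v″(t)| ≤ C₀ for 1 ≤ t ≤ t_N. Then there exists a constant C depending only on α, r and C₀ (independent of T, N, k) such that for every k with 1 ≤ k ≤ N−1, sup_{s ∈ [t_k, t_{k+1}]} | (v − v̄)(s) | ≤ C τ_{k+1}² max{1, t_k^{2α−2}} and sup_{s ∈ (t_k, t_{k+1})} | (v − v̄)′(s) | ≤ C τ_{k+1} max{1, t_k^{2α−2}}, where τ_{k+1} = t_{k+1} − t_k. -/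

import Mathlib

open MeasureTheory

/-- The graded temporal mesh `t_n = T (n/N)^r`. -/
noncomputable def mesh (r T : ℝ) (N : ℕ) (k : ℕ) : ℝ :=
  T * ((k : ℝ) / (N : ℝ)) ^ r

/-- The fitted basis functions `φ_k` on the mesh `t`, exact for `1` and `s^α`. -/
noncomputable def fittedBasis (α : ℝ) (t : ℕ → ℝ) (N : ℕ) (k : ℕ) (s : ℝ) : ℝ :=
  if k = 0 then
    if 0 ≤ s ∧ s ≤ t 1 then (t 1 ^ α - s ^ α) / t 1 ^ α else 0
  else if k = N then
    if t (N - 1) ≤ s ∧ s ≤ t N then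
      (s ^ α - t (N - 1) ^ α) / (t N ^ α - t (N - 1) ^ α)
    else 0
  else
    if t (k - 1) ≤ s ∧ s ≤ t k then
      (s ^ α - t (k - 1) ^ α) / (t k ^ α - t (k - 1) ^ α)
    else if t k ≤ s ∧ s ≤ t (k + 1) then
      (t (k + 1) ^ α - s ^ α) / (t (k + 1) ^ α - t k ^ α)
    else 0

/-- The discrete fitted Caputo operator `D_N^α` acting on grid values `u`. -/
noncomputable def discreteCaputo (α : ℝ) (t : ℕ → ℝ) (u : ℕ → ℝ) (n : ℕ) : ℝ :=
  (α / Real.Gamma (1 - α)) * ∑ k ∈ Finset.range n,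
    (u (k + 1) - u k) / (t (k + 1) ^ α - t k ^ α) *
      ∫ s in Set.Ioo (t k) (t (k + 1)), s ^ (α - 1) * (t n - s) ^ (-α)

lemma interp_bound {a b M : ℝ} (hab : a < b) (e e' e'' : ℝ → ℝ)
    (h1 : ∀ x ∈ Set.Icc a b, HasDerivAt e (e' x) x)
    (h2 : ∀ x ∈ Set.Icc a b, HasDerivAt e' (e'' x) x)
    (hM : ∀ x ∈ Set.Icc a b, |e'' x| ≤ M)
    (hea : e a = 0) (heb : e b = 0) :
    (∀ s ∈ Set.Icc a b, |e s| ≤ M * (b - a) ^ 2) ∧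
    (∀ s ∈ Set.Icc a b, |e' s| ≤ M * (b - a)) := by
  have hM0 : 0 ≤ M := le_trans (abs_nonneg _) (hM a ⟨le_refl a, hab.le⟩)
  have hba0 : 0 ≤ b - a := sub_nonneg.mpr hab.le
  have hce : ContinuousOn e (Set.Icc a b) := fun x hx =>
    (h1 x hx).continuousAt.continuousWithinAt
  have hce' : ContinuousOn e' (Set.Icc a b) := fun x hx =>
    (h2 x hx).continuousAt.continuousWithinAt
  obtain ⟨ζ, hζ, hζ0⟩ := exists_hasDerivAt_eq_zero hab hce (hea.trans heb.symm)
    (fun x hx => h1 x (Set.Ioo_subset_Icc_self hx))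
  have hE' : ∀ s ∈ Set.Icc a b, |e' s| ≤ M * (b - a) := by
    intro s hs
    rcases lt_trichotomy s ζ with h | h | h
    · obtain ⟨θ, hθ, hθeq⟩ := exists_hasDerivAt_eq_slope e' e'' h
        (hce'.mono (Set.Icc_subset_Icc hs.1 hζ.2.le))
        (fun x hx => h2 x ⟨hs.1.trans hx.1.le, hx.2.le.trans hζ.2.le⟩)
      have hne : ζ - s ≠ 0 := sub_ne_zero.mpr h.ne'
      have : e' s = -(e'' θ * (ζ - s)) := by
        rw [hζ0] at hθeq
        field_simp at hθeq
        linarith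
      rw [this, abs_neg, abs_mul]
      have h1' : |e'' θ| ≤ M := hM θ ⟨hs.1.trans hθ.1.le, hθ.2.le.trans hζ.2.le⟩
      have h2' : |ζ - s| ≤ b - a := by
        rw [abs_of_pos (sub_pos.mpr h)]
        have := hs.1; have := hζ.2; linarith
      exact mul_le_mul h1' h2' (abs_nonneg _) hM0
    · rw [h, hζ0]; simpa using mul_nonneg hM0 hba0
    · obtain ⟨θ, hθ, hθeq⟩ := exists_hasDerivAt_eq_slope e' e'' h
        (hce'.mono (Set.Icc_subset_Icc hζ.1.le hs.2))
        (fun x hx => h2 x ⟨hζ.1.le.trans hx.1.le, hx.2.le.trans hs.2⟩)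
      have hne : s - ζ ≠ 0 := sub_ne_zero.mpr h.ne'
      have : e' s = e'' θ * (s - ζ) := by
        rw [hζ0] at hθeq
        field_simp at hθeq
        linarith
      rw [this, abs_mul]
      have h1' : |e'' θ| ≤ M := hM θ ⟨hζ.1.le.trans hθ.1.le, hθ.2.le.trans hs.2⟩
      have h2' : |s - ζ| ≤ b - a := by
        rw [abs_of_pos (sub_pos.mpr h)]
        have := hζ.1; have := hs.2; linarith
      exact mul_le_mul h1' h2' (abs_nonneg _) hM0
  refine ⟨?_, hE'⟩
  intro s hs
  rcases eq_or_lt_of_le hs.1 with h | h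
  · rw [← h, hea]; simpa using mul_nonneg hM0 (by positivity)
  · obtain ⟨θ, hθ, hθeq⟩ := exists_hasDerivAt_eq_slope e e' h
      (hce.mono (Set.Icc_subset_Icc le_rfl hs.2))
      (fun x hx => h1 x ⟨hx.1.le, hx.2.le.trans hs.2⟩)
    have hne : s - a ≠ 0 := sub_ne_zero.mpr h.ne'
    have : e s = e' θ * (s - a) := by
      rw [hea] at hθeq
      field_simp at hθeq
      linarith
    rw [this, abs_mul, sq]
    have h1' : |e' θ| ≤ M * (b - a) := hE' θ ⟨hθ.1.le, hθ.2.le.trans hs.2⟩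
    have h2' : |s - a| ≤ b - a := by
      rw [abs_of_pos (sub_pos.mpr h)]
      have := hs.2; linarith
    calc |e' θ| * |s - a| ≤ (M * (b - a)) * (b - a) :=
          mul_le_mul h1' h2' (abs_nonneg _) (by positivity)
      _ = M * ((b - a) * (b - a)) := by ring
lemma mesh_strictMono {r T : ℝ} {N : ℕ} (hr : 1 ≤ r) (hT : 0 < T) (hN : 1 ≤ N)
    {i j : ℕ} (hij : i < j) : mesh r T N i < mesh r T N j := by
  have hN0 : (0:ℝ) < N := by exact_mod_cast hN
  unfold mesh
  have hr0 : 0 < r := lt_of_lt_of_le one_pos hr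
  refine mul_lt_mul_of_pos_left ?_ hT
  refine Real.rpow_lt_rpow (by positivity) ?_ hr0
  have : (i:ℝ) < (j:ℝ) := by exact_mod_cast hij
  exact div_lt_div_of_pos_right this hN0

lemma mesh_zero {r T : ℝ} {N : ℕ} (hr : 1 ≤ r) : mesh r T N 0 = 0 := by
  unfold mesh
  rw [Nat.cast_zero, zero_div, Real.zero_rpow (by positivity : r ≠ 0)]
  · ring
  
lemma mesh_pos {r T : ℝ} {N : ℕ} (hr : 1 ≤ r) (hT : 0 < T) (hN : 1 ≤ N)
    {i : ℕ} (hi : 1 ≤ i) : 0 < mesh r T N i :=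
  mesh_zero hr ▸ mesh_strictMono hr hT hN hi

lemma mesh_mono {r T : ℝ} {N : ℕ} (hr : 1 ≤ r) (hT : 0 < T) (hN : 1 ≤ N)
    {i j : ℕ} (hij : i ≤ j) : mesh r T N i ≤ mesh r T N j := by
  rcases eq_or_lt_of_le hij with h | h
  · rw [h]
  · exact (mesh_strictMono hr hT hN h).le

lemma mesh_ratio {r T : ℝ} {N : ℕ} (hr : 1 ≤ r) (hT : 0 < T) (hN : 1 ≤ N)
    {k : ℕ} (hk : 1 ≤ k) : mesh r T N (k+1) ≤ (2:ℝ) ^ r * mesh r T N k := by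
  have hN0 : (0:ℝ) < N := by exact_mod_cast hN
  have hr0 : 0 ≤ r := le_trans zero_le_one hr
  unfold mesh
  have hk1 : (1:ℝ) ≤ (k:ℝ) := by exact_mod_cast hk
  have h1 : ((k+1 : ℕ) : ℝ) / N ≤ 2 * ((k:ℝ) / N) := by
    rw [← mul_div_assoc, div_le_div_iff_of_pos_right hN0]
    push_cast; linarith
  calc T * (((k+1:ℕ):ℝ) / N) ^ r ≤ T * (2 * ((k:ℝ)/N)) ^ r := by
        refine mul_le_mul_of_nonneg_left ?_ hT.le
        exact Real.rpow_le_rpow (by positivity) h1 hr0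
    _ = (2:ℝ) ^ r * (T * ((k:ℝ)/N) ^ r) := by
        rw [Real.mul_rpow (by norm_num) (by positivity)]; ring
lemma fitted_sum_eq {α : ℝ} (hα0 : 0 < α) {t : ℕ → ℝ} {N k : ℕ} (hk1 : 1 ≤ k)
    (hkN : k + 1 ≤ N) (hmono : ∀ i j : ℕ, i < j → t i < t j) (h0 : t 0 = 0)
    (w : ℕ → ℝ) {s : ℝ} (hs : s ∈ Set.Icc (t k) (t (k + 1))) :
    ∑ j ∈ Finset.range (N + 1), fittedBasis α t N j s * w j =
      w k * ((t (k + 1) ^ α - s ^ α) / (t (k + 1) ^ α - t k ^ α)) +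
        w (k + 1) * ((s ^ α - t k ^ α) / (t (k + 1) ^ α - t k ^ α)) := by
  obtain ⟨hsa, hsb⟩ := hs
  have htnn : ∀ i : ℕ, 0 ≤ t i := by
    intro i
    rcases Nat.eq_zero_or_pos i with h | h
    · rw [h, h0]
    · rw [← h0]; exact (hmono 0 i h).le
  have hmono' : ∀ i j : ℕ, i ≤ j → t i ≤ t j := by
    intro i j hij
    rcases eq_or_lt_of_le hij with h | h
    · rw [h]
    · exact (hmono i j h).le
  have hrpow : ∀ i j : ℕ, i < j → t i ^ α < t j ^ α := fun i j h =>
    Real.rpow_lt_rpow (htnn i) (hmono i j h) hα0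
  have hDpos : 0 < t (k + 1) ^ α - t k ^ α := sub_pos.mpr (hrpow k (k + 1) (Nat.lt_succ_self k))
  have hkltN : k < N := Nat.lt_of_succ_le hkN
  -- zero terms
  have hzero : ∀ j : ℕ, j ≤ N → j ≠ k → j ≠ k + 1 → fittedBasis α t N j s = 0 := by
    intro j hjN hjk hjk1
    unfold fittedBasis
    by_cases hj0 : j = 0
    · rw [if_pos hj0]
      split_ifs with h
      · have h1k : t 1 ≤ t k := hmono' 1 k hk1
        have : s = t 1 := le_antisymm h.2 (le_trans h1k hsa)
        rw [this, sub_self, zero_div]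
      · rfl
    · rw [if_neg hj0]
      by_cases hjN' : j = N
      · rw [if_pos hjN']
        have hk1N : k + 1 ≤ N - 1 := by omega
        split_ifs with h
        · have : s = t (N - 1) := le_antisymm (hsb.trans (hmono' (k+1) (N-1) hk1N)) h.1
          rw [← this, sub_self, zero_div]
        · rfl
      · rw [if_neg hjN']
        rcases Nat.lt_or_ge j k with hjlt | hjge
        · -- j < k
          have hjk' : j + 1 ≤ k := hjlt
          split_ifs with h1 h2
          · exfalso
            have : t j < t k := hmono j k hjlt
            linarith [h1.2, hsa]
          · have : s = t (j + 1) := le_antisymm h2.2 (le_trans (hmono' (j+1) k hjk') hsa)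
            rw [this, sub_self, zero_div]
          · rfl
        · -- j > k + 1
          have hjgt : k + 2 ≤ j := by omega
          split_ifs with h1 h2
          · have hj1 : k + 1 ≤ j - 1 := by omega
            have : s = t (j - 1) := le_antisymm (hsb.trans (hmono' (k+1) (j-1) hj1)) h1.1
            rw [this, sub_self, zero_div]
          · exfalso
            have : t (k + 1) < t j := hmono (k+1) j (by omega)
            linarith [h2.1, hsb]
          · rfl
  have hφk : fittedBasis α t N k s = (t (k + 1) ^ α - s ^ α) / (t (k + 1) ^ α - t k ^ α) := by
    unfold fittedBasis
    rw [if_neg (by omega : k ≠ 0), if_neg (by omega : k ≠ N)]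
    split_ifs with h1 h2
    · have hskk : s = t k := le_antisymm h1.2 hsa
      have hd : t k ^ α - t (k - 1) ^ α ≠ 0 :=
        ne_of_gt (sub_pos.mpr (hrpow (k-1) k (by omega)))
      rw [hskk, div_self hd, eq_comm, div_self (ne_of_gt hDpos)]
    · rfl
    · exact absurd ⟨hsa, hsb⟩ h2
  have hφk1 : fittedBasis α t N (k + 1) s = (s ^ α - t k ^ α) / (t (k + 1) ^ α - t k ^ α) := by
    unfold fittedBasis
    rw [if_neg (Nat.succ_ne_zero k)]
    by_cases hkN' : k + 1 = N
    · rw [if_pos hkN']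
      have hN1 : N - 1 = k := by omega
      rw [hN1, ← hkN', if_pos ⟨hsa, hsb⟩]
    · rw [if_neg hkN', Nat.add_sub_cancel, if_pos ⟨hsa, hsb⟩]
  have hsub : ({k, k + 1} : Finset ℕ) ⊆ Finset.range (N + 1) := by
    intro x hx
    simp only [Finset.mem_insert, Finset.mem_singleton] at hx
    rcases hx with h | h <;> simp [h] <;> omega
  rw [← Finset.sum_subset hsub (fun j hj hj' => ?_), Finset.sum_pair (by omega : k ≠ k + 1),
    hφk, hφk1]
  · ring
  · simp only [Finset.mem_insert, Finset.mem_singleton, not_or] at hj'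
    rw [hzero j (by simpa using Nat.lt_succ_iff.mp (Finset.mem_range.mp hj)) hj'.1 hj'.2,
      zero_mul]
lemma pow_ratio_aux {x y R β : ℝ} (hx : 0 < x) (hR : 1 ≤ R) (hy0 : 0 ≤ y)
    (hy : y ≤ R * x) (hβ0 : 0 ≤ β) (hβ1 : β ≤ 1) : y ^ β ≤ R * x ^ β := by
  calc y ^ β ≤ (R * x) ^ β := Real.rpow_le_rpow hy0 hy hβ0
    _ = R ^ β * x ^ β := Real.mul_rpow (by linarith) hx.le
    _ ≤ R * x ^ β := by
        refine mul_le_mul_of_nonneg_right ?_ (by positivity)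
        calc R ^ β ≤ R ^ (1:ℝ) := Real.rpow_le_rpow_of_exponent_le hR hβ1
          _ = R := Real.rpow_one R

theorem fitted_interpolation_error (α r C₀ : ℝ) (hα0 : 0 < α) (hα1 : α < 1)
    (hr : 1 ≤ r) (hC₀ : 0 ≤ C₀) :
    ∃ C : ℝ, ∀ T : ℝ, 0 < T → ∀ N : ℕ, 1 ≤ N → ∀ v v' v'' : ℝ → ℝ,
      v 0 = 0 →
      (∀ s ∈ Set.Ioc (0 : ℝ) (mesh r T N N),
        HasDerivAt v (v' s) s ∧ HasDerivAt v' (v'' s) s) →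
      ContinuousOn v'' (Set.Ioc 0 (mesh r T N N)) →
      (∀ s ∈ Set.Ioc (0 : ℝ) (min 1 (mesh r T N N)),
        |v' s| ≤ C₀ * s ^ (2 * α - 1) ∧ |v'' s| ≤ C₀ * s ^ (2 * α - 2)) →
      (∀ s : ℝ, 1 ≤ s → s ≤ mesh r T N N → |v' s| ≤ C₀ ∧ |v'' s| ≤ C₀) →
      ∀ k : ℕ, 1 ≤ k → k + 1 ≤ N →
        (∀ s ∈ Set.Icc (mesh r T N k) (mesh r T N (k + 1)),
          |v s - ∑ j ∈ Finset.range (N + 1),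
              fittedBasis α (mesh r T N) N j s * v (mesh r T N j)|
            ≤ C * (mesh r T N (k + 1) - mesh r T N k) ^ 2 *
                max 1 (mesh r T N k ^ (2 * α - 2))) ∧
        (∀ s ∈ Set.Ioo (mesh r T N k) (mesh r T N (k + 1)),
          |deriv (fun x => v x - ∑ j ∈ Finset.range (N + 1),
              fittedBasis α (mesh r T N) N j x * v (mesh r T N j)) s|
            ≤ C * (mesh r T N (k + 1) - mesh r T N k) *
                max 1 (mesh r T N k ^ (2 * α - 2))) := by
  refine ⟨C₀ * (1 + (2:ℝ) ^ r * (2:ℝ) ^ r), ?_⟩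
  intro T hT N hN v v' v'' hv0 hderiv hcont hbd1 hbd2 k hk1 hkN
  set t := mesh r T N with htdef
  have hmono : ∀ i j : ℕ, i < j → t i < t j := fun i j h => mesh_strictMono hr hT hN h
  have ht0 : t 0 = 0 := mesh_zero hr
  have ha : 0 < t k := mesh_pos hr hT hN hk1
  have hb : 0 < t (k + 1) := mesh_pos hr hT hN (by omega)
  have hab : t k < t (k + 1) := hmono _ _ (Nat.lt_succ_self k)
  have hba : (0:ℝ) < t (k + 1) - t k := sub_pos.mpr hab
  have hbN : t (k + 1) ≤ t N := mesh_mono hr hT hN hkN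
  have hratio : t (k + 1) ≤ (2:ℝ) ^ r * t k := mesh_ratio hr hT hN hk1
  have h2r : (1:ℝ) ≤ (2:ℝ) ^ r := Real.one_le_rpow one_le_two (by linarith)
  have hRnn : (0:ℝ) ≤ (2:ℝ) ^ r := by linarith
  have hsubI : Set.Icc (t k) (t (k + 1)) ⊆ Set.Ioc 0 (t N) := fun x hx =>
    ⟨lt_of_lt_of_le ha hx.1, hx.2.trans hbN⟩
  have hD : 0 < t (k + 1) ^ α - t k ^ α :=
    sub_pos.mpr (Real.rpow_lt_rpow ha.le hab hα0)
  obtain ⟨c, hcdef⟩ : ∃ c : ℝ,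
      c = (v (t (k + 1)) - v (t k)) / (t (k + 1) ^ α - t k ^ α) := ⟨_, rfl⟩
  have hmax1 : (1:ℝ) ≤ max 1 (t k ^ (2 * α - 2)) := le_max_left _ _
  have hmaxnn : (0:ℝ) ≤ max 1 (t k ^ (2 * α - 2)) := by linarith
  -- the interpolant equals the local linear-in-`s^α` function
  have hsum : ∀ s ∈ Set.Icc (t k) (t (k + 1)),
      (∑ j ∈ Finset.range (N + 1), fittedBasis α t N j s * v (t j)) =
        v (t k) + c * (s ^ α - t k ^ α) := by
    intro s hs
    have h := fitted_sum_eq hα0 hk1 hkN hmono ht0 (fun j => v (t j)) hs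
    beta_reduce at h
    rw [h, hcdef]
    field_simp
    ring
  -- endpoint values
  have hEa : v (t k) - (v (t k) + c * (t k ^ α - t k ^ α)) = 0 := by simp
  have hEb : v (t (k + 1)) - (v (t k) + c * (t (k + 1) ^ α - t k ^ α)) = 0 := by
    rw [hcdef]; field_simp; ring
  -- derivatives of the interpolant
  have hPd : ∀ x : ℝ, 0 < x →
      HasDerivAt (fun s => v (t k) + c * (s ^ α - t k ^ α)) (c * (α * x ^ (α - 1))) x := by
    intro x hx
    have h := (Real.hasDerivAt_rpow_const (x := x) (p := α) (Or.inl hx.ne')).sub_const (t k ^ α)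
    exact (h.const_mul c).const_add (v (t k))
  have hP2 : ∀ x : ℝ, 0 < x →
      HasDerivAt (fun s => c * (α * s ^ (α - 1)))
        (c * (α * ((α - 1) * x ^ (α - 1 - 1)))) x := by
    intro x hx
    have h := Real.hasDerivAt_rpow_const (x := x) (p := α - 1) (Or.inl hx.ne')
    exact (h.const_mul α).const_mul c
  have h1 : ∀ x ∈ Set.Icc (t k) (t (k + 1)),
      HasDerivAt (fun s => v s - (v (t k) + c * (s ^ α - t k ^ α)))
        (v' x - c * (α * x ^ (α - 1))) x := fun x hx =>
    ((hderiv x (hsubI hx)).1).sub (hPd x (lt_of_lt_of_le ha hx.1))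
  have h2 : ∀ x ∈ Set.Icc (t k) (t (k + 1)),
      HasDerivAt (fun s => v' s - c * (α * s ^ (α - 1)))
        (v'' x - c * (α * ((α - 1) * x ^ (α - 1 - 1)))) x := fun x hx =>
    ((hderiv x (hsubI hx)).2).sub (hP2 x (lt_of_lt_of_le ha hx.1))
  -- bound on |v''|
  have hv''b : ∀ x ∈ Set.Icc (t k) (t (k + 1)),
      |v'' x| ≤ C₀ * max 1 (t k ^ (2 * α - 2)) := by
    intro x hx
    have hx0 : 0 < x := lt_of_lt_of_le ha hx.1
    rcases le_or_gt x 1 with hx1 | hx1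
    · refine ((hbd1 x ⟨hx0, le_min hx1 (hx.2.trans hbN)⟩).2).trans ?_
      refine mul_le_mul_of_nonneg_left (le_trans ?_ (le_max_right _ _)) hC₀
      exact Real.rpow_le_rpow_of_nonpos ha hx.1 (by linarith)
    · exact ((hbd2 x hx1.le (hx.2.trans hbN)).2).trans (le_mul_of_one_le_right hC₀ hmax1)
  -- mean value points
  have hvc : ContinuousOn v (Set.Icc (t k) (t (k + 1))) := fun x hx =>
    ((hderiv x (hsubI hx)).1).continuousAt.continuousWithinAt
  obtain ⟨ξ, hξ, hξeq⟩ := exists_hasDerivAt_eq_slope v v' hab hvc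
    (fun x hx => (hderiv x (hsubI (Set.Ioo_subset_Icc_self hx))).1)
  obtain ⟨η, hη, hηeq'⟩ := exists_hasDerivAt_eq_slope (fun y : ℝ => y ^ α)
    (fun y => α * y ^ (α - 1)) hab
    (fun x hx => (Real.hasDerivAt_rpow_const (x := x) (p := α)
      (Or.inl (lt_of_lt_of_le ha hx.1).ne')).continuousAt.continuousWithinAt)
    (fun x hx => Real.hasDerivAt_rpow_const (Or.inl (ha.trans hx.1).ne'))
  have hξ0 : 0 < ξ := ha.trans hξ.1
  have hη0 : 0 < η := ha.trans hη.1
  have hηeq : α * η ^ (α - 1) = (t (k + 1) ^ α - t k ^ α) / (t (k + 1) - t k) := hηeq'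
  have hαη : 0 < α * η ^ (α - 1) := by positivity
  -- |c| * α = |v' ξ| * η ^ (1 - α)
  have hone : η ^ (α - 1) * η ^ (1 - α) = 1 := by
    rw [← Real.rpow_add hη0]
    norm_num
  have hc2 : |c| * α = |v' ξ| * η ^ (1 - α) := by
    have e1 : v' ξ * (t (k + 1) - t k) = v (t (k + 1)) - v (t k) :=
      (eq_div_iff hba.ne').mp hξeq
    have e2 : α * η ^ (α - 1) * (t (k + 1) - t k) = t (k + 1) ^ α - t k ^ α :=
      (eq_div_iff hba.ne').mp hηeq
    have e3 : c * (α * η ^ (α - 1)) = v' ξ := by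
      rw [hcdef, ← e1, ← e2]
      field_simp
    have e4 : |c| * (α * η ^ (α - 1)) = |v' ξ| := by
      rw [← abs_of_pos hαη, ← abs_mul, e3]
    have e5 : |c| * α * (η ^ (α - 1) * η ^ (1 - α)) = |v' ξ| * η ^ (1 - α) := by
      rw [show |c| * α * (η ^ (α - 1) * η ^ (1 - α)) =
        |c| * (α * η ^ (α - 1)) * η ^ (1 - α) from by ring, e4]
    rwa [hone, mul_one] at e5
  -- key quantitative bound
  have hBB : t (k + 1) ^ (1 - α) * t k ^ (α - 2) ≤ (2:ℝ) ^ r * t k ^ (-1:ℝ) := by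
    have hbpow : t (k + 1) ^ (1 - α) ≤ (2:ℝ) ^ r * t k ^ (1 - α) :=
      pow_ratio_aux ha h2r hb.le hratio (by linarith) (by linarith)
    calc t (k + 1) ^ (1 - α) * t k ^ (α - 2)
        ≤ ((2:ℝ) ^ r * t k ^ (1 - α)) * t k ^ (α - 2) :=
          mul_le_mul_of_nonneg_right hbpow (by positivity)
      _ = (2:ℝ) ^ r * (t k ^ (1 - α) * t k ^ (α - 2)) := by ring
      _ = (2:ℝ) ^ r * t k ^ (-1:ℝ) := by
          rw [← Real.rpow_add ha]; norm_num
  have hQB : |v' ξ| * (t (k + 1) ^ (1 - α) * t k ^ (α - 2)) ≤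
      C₀ * ((2:ℝ) ^ r * (2:ℝ) ^ r) * max 1 (t k ^ (2 * α - 2)) := by
    rcases le_or_gt 1 ξ with hξ1 | hξ1
    · -- ξ ≥ 1
      have hQ : |v' ξ| ≤ C₀ := (hbd2 ξ hξ1 (hξ.2.le.trans hbN)).1
      have hAinv : t k ^ (-1:ℝ) ≤ (2:ℝ) ^ r := by
        rw [Real.rpow_neg_one, ← one_div, div_le_iff₀ ha]
        calc (1:ℝ) ≤ t (k + 1) := hξ1.trans hξ.2.le
          _ ≤ (2:ℝ) ^ r * t k := hratio
      have hBB2 : t (k + 1) ^ (1 - α) * t k ^ (α - 2) ≤ (2:ℝ) ^ r * (2:ℝ) ^ r :=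
        hBB.trans (mul_le_mul_of_nonneg_left hAinv hRnn)
      calc |v' ξ| * (t (k + 1) ^ (1 - α) * t k ^ (α - 2))
          ≤ C₀ * ((2:ℝ) ^ r * (2:ℝ) ^ r) :=
            mul_le_mul hQ hBB2 (by positivity) hC₀
        _ ≤ C₀ * ((2:ℝ) ^ r * (2:ℝ) ^ r) * max 1 (t k ^ (2 * α - 2)) :=
            le_mul_of_one_le_right (mul_nonneg hC₀ (by positivity)) hmax1
    · -- ξ < 1
      have hQξ : |v' ξ| ≤ C₀ * ξ ^ (2 * α - 1) :=
        (hbd1 ξ ⟨hξ0, le_min hξ1.le (hξ.2.le.trans hbN)⟩).1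
      rcases le_or_gt (2 * α - 1) 0 with h2a | h2a
      · have hξpow : ξ ^ (2 * α - 1) ≤ t k ^ (2 * α - 1) :=
          Real.rpow_le_rpow_of_nonpos ha hξ.1.le h2a
        calc |v' ξ| * (t (k + 1) ^ (1 - α) * t k ^ (α - 2))
            ≤ (C₀ * t k ^ (2 * α - 1)) * ((2:ℝ) ^ r * t k ^ (-1:ℝ)) :=
              mul_le_mul (hQξ.trans (mul_le_mul_of_nonneg_left hξpow hC₀)) hBB
                (by positivity) (mul_nonneg hC₀ (by positivity))
          _ = C₀ * (2:ℝ) ^ r * (t k ^ (2 * α - 1) * t k ^ (-1:ℝ)) := by ring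
          _ = C₀ * (2:ℝ) ^ r * t k ^ (2 * α - 2) := by
              rw [← Real.rpow_add ha, show 2 * α - 1 + (-1:ℝ) = 2 * α - 2 from by ring]
          _ ≤ C₀ * ((2:ℝ) ^ r * (2:ℝ) ^ r) * max 1 (t k ^ (2 * α - 2)) := by
              refine mul_le_mul ?_ (le_max_right _ _) (by positivity)
                (mul_nonneg hC₀ (by positivity))
              nlinarith [mul_nonneg hC₀ hRnn]
      · have hξpow : ξ ^ (2 * α - 1) ≤ t (k + 1) ^ (2 * α - 1) :=
          Real.rpow_le_rpow hξ0.le hξ.2.le h2a.le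
        have hbpow2 : t (k + 1) ^ (2 * α - 1) ≤ (2:ℝ) ^ r * t k ^ (2 * α - 1) :=
          pow_ratio_aux ha h2r hb.le hratio h2a.le (by linarith)
        calc |v' ξ| * (t (k + 1) ^ (1 - α) * t k ^ (α - 2))
            ≤ (C₀ * ((2:ℝ) ^ r * t k ^ (2 * α - 1))) * ((2:ℝ) ^ r * t k ^ (-1:ℝ)) :=
              mul_le_mul
                (hQξ.trans (mul_le_mul_of_nonneg_left (hξpow.trans hbpow2) hC₀)) hBB
                (by positivity) (mul_nonneg hC₀ (by positivity))
          _ = C₀ * ((2:ℝ) ^ r * (2:ℝ) ^ r) * (t k ^ (2 * α - 1) * t k ^ (-1:ℝ)) := by ring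
          _ = C₀ * ((2:ℝ) ^ r * (2:ℝ) ^ r) * t k ^ (2 * α - 2) := by
              rw [← Real.rpow_add ha, show 2 * α - 1 + (-1:ℝ) = 2 * α - 2 from by ring]
          _ ≤ C₀ * ((2:ℝ) ^ r * (2:ℝ) ^ r) * max 1 (t k ^ (2 * α - 2)) :=
              mul_le_mul_of_nonneg_left (le_max_right _ _) (mul_nonneg hC₀ (by positivity))
  -- the second-derivative bound
  have hηb : η ^ (1 - α) ≤ t (k + 1) ^ (1 - α) :=
    Real.rpow_le_rpow hη0.le hη.2.le (by linarith)
  have hM : ∀ x ∈ Set.Icc (t k) (t (k + 1)),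
      |v'' x - c * (α * ((α - 1) * x ^ (α - 1 - 1)))| ≤
        (C₀ * (1 + (2:ℝ) ^ r * (2:ℝ) ^ r)) * max 1 (t k ^ (2 * α - 2)) := by
    intro x hx
    have hx0 : 0 < x := lt_of_lt_of_le ha hx.1
    have habs2 : |c * (α * ((α - 1) * x ^ (α - 1 - 1)))| =
        (|c| * α) * ((1 - α) * x ^ (α - 2)) := by
      rw [show α - 1 - 1 = α - 2 from by ring, abs_mul, abs_mul, abs_mul,
        abs_of_pos hα0, abs_of_pos (Real.rpow_pos_of_pos hx0 _),
        abs_of_neg (by linarith : α - 1 < 0)]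
      ring
    have hxpow : x ^ (α - 2) ≤ t k ^ (α - 2) :=
      Real.rpow_le_rpow_of_nonpos ha hx.1 (by linarith)
    have hterm : |c * (α * ((α - 1) * x ^ (α - 1 - 1)))| ≤
        |v' ξ| * (t (k + 1) ^ (1 - α) * t k ^ (α - 2)) := by
      rw [habs2, hc2]
      calc |v' ξ| * η ^ (1 - α) * ((1 - α) * x ^ (α - 2))
          ≤ |v' ξ| * t (k + 1) ^ (1 - α) * (1 * t k ^ (α - 2)) := by
            refine mul_le_mul (mul_le_mul_of_nonneg_left hηb (abs_nonneg _))
              (mul_le_mul (by linarith) hxpow (by positivity) zero_le_one)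
              (mul_nonneg (by linarith) (by positivity)) (by positivity)
        _ = |v' ξ| * (t (k + 1) ^ (1 - α) * t k ^ (α - 2)) := by ring
    calc |v'' x - c * (α * ((α - 1) * x ^ (α - 1 - 1)))|
        ≤ |v'' x| + |c * (α * ((α - 1) * x ^ (α - 1 - 1)))| := by
          rw [sub_eq_add_neg]
          refine (abs_add_le _ _).trans ?_
          rw [abs_neg]
      _ ≤ C₀ * max 1 (t k ^ (2 * α - 2)) +
            C₀ * ((2:ℝ) ^ r * (2:ℝ) ^ r) * max 1 (t k ^ (2 * α - 2)) :=
          add_le_add (hv''b x hx) (hterm.trans hQB)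
      _ = (C₀ * (1 + (2:ℝ) ^ r * (2:ℝ) ^ r)) * max 1 (t k ^ (2 * α - 2)) := by ring
  obtain ⟨hB1, hB2⟩ := interp_bound hab
    (fun s => v s - (v (t k) + c * (s ^ α - t k ^ α)))
    (fun s => v' s - c * (α * s ^ (α - 1)))
    (fun s => v'' s - c * (α * ((α - 1) * s ^ (α - 1 - 1)))) h1 h2 hM hEa hEb
  constructor
  · intro s hs
    calc |v s - ∑ j ∈ Finset.range (N + 1), fittedBasis α t N j s * v (t j)|
        = |v s - (v (t k) + c * (s ^ α - t k ^ α))| := by rw [hsum s hs]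
      _ ≤ (C₀ * (1 + (2:ℝ) ^ r * (2:ℝ) ^ r)) * max 1 (t k ^ (2 * α - 2)) *
            (t (k + 1) - t k) ^ 2 := hB1 s hs
      _ = C₀ * (1 + (2:ℝ) ^ r * (2:ℝ) ^ r) * (t (k + 1) - t k) ^ 2 *
            max 1 (t k ^ (2 * α - 2)) := by ring
  · intro s hs
    have hseq : deriv (fun x => v x - ∑ j ∈ Finset.range (N + 1),
        fittedBasis α t N j x * v (t j)) s = v' s - c * (α * s ^ (α - 1)) := by
      have hev : (fun x => v x - ∑ j ∈ Finset.range (N + 1),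
          fittedBasis α t N j x * v (t j)) =ᶠ[nhds s]
          (fun x => v x - (v (t k) + c * (x ^ α - t k ^ α))) := by
        filter_upwards [isOpen_Ioo.mem_nhds hs] with x hx
        rw [hsum x (Set.Ioo_subset_Icc_self hx)]
      rw [hev.deriv_eq]
      exact (h1 s (Set.Ioo_subset_Icc_self hs)).deriv
    rw [hseq]
    calc |v' s - c * (α * s ^ (α - 1))|
        ≤ (C₀ * (1 + (2:ℝ) ^ r * (2:ℝ) ^ r)) * max 1 (t k ^ (2 * α - 2)) *
            (t (k + 1) - t k) := hB2 s (Set.Ioo_subset_Icc_self hs)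
      _ = C₀ * (1 + (2:ℝ) ^ r * (2:ℝ) ^ r) * (t (k + 1) - t k) *
            max 1 (t k ^ (2 * α - 2)) := by ring
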